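/- Let X be a smooth scheme over a scheme S of characteristic p > 0, and let (E, ∇) be a quasi-coherent O_X-module with integrable S-connection. Then the p-curvature map ψ(∇) : Der(X/S) → End_S(E), defined by D ↦ (∇(D))^p − ∇(D^p), is additive: ψ(∇)(D₁ + D₂) = ψ(∇)(D₁) + ψ(∇)(D₂) for local sections D₁, D₂ of Der(X/S). -/

import Mathlib

universe u

open Finset Polynomial

namespace PCurvAux

attribute [local instance 100] LieRing.ofAssociativeRing
attribute [local instance 2000] LieAlgebra.ofAssociativeAlgebra
attribute [local instance 2000] FreeLieAlgebra.instLieAlgebra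

theorem choose_sub_one (p : ℕ) (hp : p.Prime) :
    ∀ m : ℕ, m ≤ p - 1 → ∃ k : ℤ, (((p - 1).choose m : ℕ) : ℤ) = (-1) ^ m + p * k := by
  intro m
  induction m with
  | zero => intro _; exact ⟨0, by simp⟩
  | succ m ih =>
    intro hm
    obtain ⟨k, hk⟩ := ih (le_trans (Nat.le_succ m) hm)
    have hp1 : p - 1 + 1 = p := Nat.succ_pred_eq_of_pos hp.pos
    have pascal : ((p - 1).choose m + (p - 1).choose (m + 1) : ℕ) = p.choose (m + 1) := by
      conv_rhs => rw [← hp1]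
      rw [Nat.choose_succ_succ]
    have h2 := hp.two_le
    obtain ⟨c, hc⟩ : (p : ℕ) ∣ p.choose (m + 1) :=
      hp.dvd_choose_self (Nat.succ_ne_zero m) (by omega)
    refine ⟨c - k, ?_⟩
    have : (((p - 1).choose (m + 1) : ℕ) : ℤ) = (p : ℤ) * c - ((p - 1).choose m : ℕ) := by
      have := congrArg (fun n : ℕ => (n : ℤ)) pascal
      push_cast at this ⊢
      rw [hc] at this
      push_cast at this
      linarith
    rw [this, hk]
    ring

theorem sign_choose (p : ℕ) (hp : p.Prime) :
    ∀ m : ℕ, m ≤ p - 1 →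
      ∃ k : ℤ, ((-1 : ℤ)) ^ (p - 1 - m) * (((p - 1).choose m : ℕ) : ℤ) = 1 + p * k := by
  intro m hm
  obtain ⟨k, hk⟩ := choose_sub_one p hp m hm
  have h1 : ((-1 : ℤ)) ^ (p - 1 - m) * (-1) ^ m = (-1) ^ (p - 1) := pow_sub_mul_pow (-1) hm
  have h2 : ∃ e : ℤ, ((-1 : ℤ)) ^ (p - 1) = 1 + p * e := by
    rcases hp.eq_two_or_odd' with h2 | hodd
    · exact ⟨-1, by subst h2; norm_num⟩
    · have : Even (p - 1) := Nat.Odd.sub_odd hodd odd_one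
      exact ⟨0, by rw [this.neg_one_pow]; ring⟩
  obtain ⟨e, he⟩ := h2
  refine ⟨e + (-1) ^ (p - 1 - m) * k, ?_⟩
  rw [hk, mul_add, h1, he]
  ring


theorem ad_pow_eval {T : Type*} [Ring T] (a b : T) (n : ℕ) :
    (fun c => a * c - c * a)^[n] b
      = ∑ m ∈ range (n + 1),
          (((-1 : ℤ)) ^ (n - m) * ((n.choose m : ℕ) : ℤ)) • (a ^ m * b * a ^ (n - m)) := by
  have hfun : (fun c => a * c - c * a)
      = ⇑(LinearMap.mulLeft ℤ a - LinearMap.mulRight ℤ a) := by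
    funext c
    simp [LinearMap.sub_apply]
  rw [hfun, ← Module.End.pow_apply]
  have hcomm : Commute (LinearMap.mulLeft ℤ a) (-(LinearMap.mulRight ℤ a)) :=
    (LinearMap.commute_mulLeft_right a a).neg_right
  rw [sub_eq_add_neg, hcomm.add_pow n, LinearMap.sum_apply]
  refine Finset.sum_congr rfl fun m hm => ?_
  have hneg1 : (-1 : Module.End ℤ T) = ((-1 : ℤ) : Module.End ℤ T) := by norm_num
  rw [neg_pow, hneg1, ← Int.cast_pow]
  simp only [Module.End.mul_apply, Module.End.natCast_apply, Module.End.intCast_apply,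
    LinearMap.pow_mulLeft, LinearMap.pow_mulRight, LinearMap.mulLeft_apply,
    LinearMap.mulRight_apply, LinearMap.smul_apply, map_smul, natCast_zsmul]
  rw [mul_smul]
  simp only [mul_smul_comm, smul_mul_assoc, natCast_zsmul, zsmul_eq_mul, Int.cast_pow,
    Int.cast_neg, Int.cast_one, Int.cast_natCast]
  rw [nsmul_eq_mul, ← mul_assoc, (Nat.cast_commute (n.choose m) ((-1 : T) ^ (n - m))).eq,
    mul_assoc]
  simp [mul_assoc]


theorem ad_pow_eval_prime {T : Type*} [Ring T] (p : ℕ) (hp : p.Prime) (a b : T) :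
    ∃ z : T, (fun c => a * c - c * a)^[p - 1] b
      = (∑ m ∈ range p, a ^ m * b * a ^ (p - 1 - m)) + (p : ℤ) • z := by
  have hrange : p - 1 + 1 = p := Nat.succ_pred_eq_of_pos hp.pos
  have h := fun (m : ℕ) (hm : m < p) => sign_choose p hp m (by omega)
  choose k hk using h
  refine ⟨∑ m ∈ (range p).attach, k m.1 (mem_range.mp m.2) • (a ^ m.1 * b * a ^ (p - 1 - m.1)), ?_⟩
  rw [ad_pow_eval a b (p - 1), hrange]
  rw [Finset.smul_sum]
  rw [← Finset.sum_attach (range p)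
      (fun m => (((-1 : ℤ)) ^ (p - 1 - m) * (((p - 1).choose m : ℕ) : ℤ)) • (a ^ m * b * a ^ (p - 1 - m))),
    ← Finset.sum_attach (range p) (fun m => a ^ m * b * a ^ (p - 1 - m)),
    ← Finset.sum_add_distrib]
  refine Finset.sum_congr rfl fun m _ => ?_
  rw [hk m.1 (mem_range.mp m.2), add_smul, one_smul, mul_smul]


noncomputable def piF : FreeLieAlgebra ℤ (Fin 2) →ₗ⁅ℤ⁆ FreeAlgebra ℤ (Fin 2) :=
  FreeLieAlgebra.lift ℤ (FreeAlgebra.ι ℤ)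

def IsJac (p : ℕ) (v : FreeAlgebra ℤ (Fin 2)) : Prop :=
  ∃ w z, v = piF w + (p : ℤ) • z

namespace IsJac

variable {p : ℕ}

theorem zero : IsJac p 0 := ⟨0, 0, by simp⟩

theorem pi (w : FreeLieAlgebra ℤ (Fin 2)) : IsJac p (piF w) := ⟨w, 0, by simp⟩

theorem psmul (v : FreeAlgebra ℤ (Fin 2)) : IsJac p ((p : ℤ) • v) := ⟨0, v, by simp⟩

theorem add {v v' : FreeAlgebra ℤ (Fin 2)} (h : IsJac p v) (h' : IsJac p v') :
    IsJac p (v + v') := by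
  obtain ⟨w, z, rfl⟩ := h
  obtain ⟨w', z', rfl⟩ := h'
  exact ⟨w + w', z + z', by rw [map_add piF, smul_add]; abel⟩

theorem zsmul {v : FreeAlgebra ℤ (Fin 2)} (c : ℤ) (h : IsJac p v) : IsJac p (c • v) := by
  obtain ⟨w, z, rfl⟩ := h
  exact ⟨c • w, c • z, by rw [map_zsmul piF, smul_add, smul_comm]⟩

theorem neg {v : FreeAlgebra ℤ (Fin 2)} (h : IsJac p v) : IsJac p (-v) := by
  simpa using h.zsmul (-1)

theorem sub {v v' : FreeAlgebra ℤ (Fin 2)} (h : IsJac p v) (h' : IsJac p v') :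
    IsJac p (v - v') := by
  rw [sub_eq_add_neg]; exact h.add h'.neg

theorem sum {s : Finset ℕ} {f : ℕ → FreeAlgebra ℤ (Fin 2)}
    (h : ∀ i ∈ s, IsJac p (f i)) : IsJac p (∑ i ∈ s, f i) := by
  classical
  induction s using Finset.induction_on with
  | empty => simpa using zero
  | @insert a s' hx ih =>
    rw [Finset.sum_insert hx]
    exact (h a (Finset.mem_insert_self a s')).add
      (ih fun i hi => h i (Finset.mem_insert_of_mem hi))

theorem brk (i : Fin 2) {v : FreeAlgebra ℤ (Fin 2)} (h : IsJac p v) :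
    IsJac p (FreeAlgebra.ι ℤ i * v - v * FreeAlgebra.ι ℤ i) := by
  obtain ⟨w, z, rfl⟩ := h
  refine ⟨⁅FreeLieAlgebra.of ℤ i, w⁆, FreeAlgebra.ι ℤ i * z - z * FreeAlgebra.ι ℤ i, ?_⟩
  rw [LieHom.map_lie, piF, FreeLieAlgebra.lift_of_apply, Ring.lie_def,
    mul_add, add_mul, smul_sub, mul_smul_comm, smul_mul_assoc]
  abel

end IsJac


section Poly

variable (p : ℕ)

local notation "F" => FreeAlgebra ℤ (Fin 2)
local notation "𝕩" => FreeAlgebra.ι ℤ (0 : Fin 2)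
local notation "𝕪" => FreeAlgebra.ι ℤ (1 : Fin 2)

/-- the generic degree-one polynomial `x·t + y` -/
noncomputable def alphaP : Polynomial F := C 𝕩 * X + C 𝕪

/-- all coefficients are Lie elements mod `p` -/
def Good (q : Polynomial F) : Prop := ∀ n, IsJac p (q.coeff n)

theorem good_C (i : Fin 2) : Good p (C (FreeAlgebra.ι ℤ i)) := by
  intro n
  rcases n with _ | n
  · rw [coeff_C_zero]
    exact ⟨FreeLieAlgebra.of ℤ i, 0, by simp [piF, FreeLieAlgebra.lift_of_apply]⟩
  · rw [coeff_C, if_neg (Nat.succ_ne_zero n)]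
    exact IsJac.zero

theorem good_ad {q : Polynomial F} (hq : Good p q) :
    Good p (alphaP * q - q * alphaP) := by
  intro n
  rcases n with _ | m
  · have h0 : (alphaP * q - q * alphaP).coeff 0
        = 𝕪 * q.coeff 0 - q.coeff 0 * 𝕪 := by
      simp [alphaP, coeff_sub, mul_coeff_zero, coeff_X_zero]
    rw [h0]
    exact IsJac.brk 1 (hq 0)
  · have h1 : (alphaP * q - q * alphaP).coeff (m + 1)
        = (𝕩 * q.coeff m - q.coeff m * 𝕩)
          + (𝕪 * q.coeff (m + 1) - q.coeff (m + 1) * 𝕪) := by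
      rw [alphaP, coeff_sub, add_mul, mul_add, coeff_add, coeff_add,
        mul_assoc, coeff_C_mul, coeff_X_mul, coeff_C_mul, ← mul_assoc,
        coeff_mul_X, coeff_mul_C, coeff_mul_C]
      abel
    rw [h1]
    exact (IsJac.brk 0 (hq m)).add (IsJac.brk 1 (hq (m + 1)))

theorem derivative_pow_eq {T : Type*} [Ring T] (q : Polynomial T) :
    ∀ n : ℕ, derivative (q ^ n) = ∑ i ∈ range n, q ^ i * derivative q * q ^ (n - 1 - i) := by
  intro n
  induction n with
  | zero => simp
  | succ n ih =>
    rw [pow_succ, derivative_mul, ih, sum_range_succ]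
    simp only [Nat.add_sub_cancel]
    rw [Finset.sum_mul]
    congr 1
    · refine Finset.sum_congr rfl fun i hi => ?_
      have he : n - i = n - 1 - i + 1 := by
        have := Finset.mem_range.mp hi; omega
      rw [he, pow_succ, mul_assoc]
    · simp

theorem alphaP_natDegree_le : (alphaP).natDegree ≤ 1 := by
  refine le_trans (natDegree_add_le _ _) ?_
  simp only [natDegree_C, max_le_iff]
  exact ⟨le_trans (natDegree_C_mul_le _ _) natDegree_X_le, Nat.zero_le 1⟩

theorem alphaP_pow_natDegree_le (n : ℕ) : ((alphaP) ^ n).natDegree ≤ n := by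
  refine le_trans natDegree_pow_le ?_
  have := alphaP_natDegree_le
  nlinarith

theorem alphaP_coeff_top (n : ℕ) : ((alphaP) ^ n).coeff n = 𝕩 ^ n := by
  induction n with
  | zero => simp
  | succ n ih =>
    have h0 : (alphaP ^ n).coeff (n + 1) = 0 :=
      coeff_eq_zero_of_natDegree_lt (lt_of_le_of_lt (alphaP_pow_natDegree_le n) (Nat.lt_succ_self n))
    have key : ∀ (q : Polynomial F) (m : ℕ),
        (q * alphaP).coeff (m + 1) = q.coeff m * 𝕩 + q.coeff (m + 1) * 𝕪 := by
      intro q m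
      rw [alphaP, mul_add, coeff_add, ← mul_assoc, coeff_mul_X, coeff_mul_C, coeff_mul_C]
    rw [pow_succ, key, h0, zero_mul, add_zero, ih, pow_succ]

theorem alphaP_coeff_zero (n : ℕ) : ((alphaP) ^ n).coeff 0 = 𝕪 ^ n := by
  induction n with
  | zero => simp
  | succ n ih =>
    rw [pow_succ, mul_coeff_zero, ih]
    have : (alphaP).coeff 0 = 𝕪 := by
      simp [alphaP, mul_coeff_zero, coeff_X_zero]
    rw [this, pow_succ]

theorem jacobson (hp : p.Prime) :
    ∃ (w : FreeLieAlgebra ℤ (Fin 2)) (z : FreeAlgebra ℤ (Fin 2)),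
      (𝕩 + 𝕪) ^ p - 𝕩 ^ p - 𝕪 ^ p = piF w + (p : ℤ) • z := by
  suffices h : IsJac p ((𝕩 + 𝕪) ^ p - 𝕩 ^ p - 𝕪 ^ p) from h
  -- Step A : all coefficients of `derivative (alphaP ^ p)` are Lie mod p
  have hgood_it : ∀ k : ℕ,
      Good p ((fun c => alphaP * c - c * alphaP)^[k] (C 𝕩)) := by
    intro k
    induction k with
    | zero => simpa using good_C p 0
    | succ k ih =>
      rw [Function.iterate_succ_apply']
      exact good_ad p ih
  obtain ⟨z₁, hz₁⟩ := ad_pow_eval_prime p hp (alphaP) (C 𝕩)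
  have hda : derivative (alphaP) = C 𝕩 := by
    simp [alphaP]
  have hder : derivative (alphaP ^ p)
      = (fun c => alphaP * c - c * alphaP)^[p - 1] (C 𝕩) - (p : ℤ) • z₁ := by
    rw [derivative_pow_eq, hda, hz₁]
    abel
  have hgood_der : Good p (derivative (alphaP ^ p)) := by
    intro n
    rw [hder, coeff_sub, coeff_smul]
    exact (hgood_it (p - 1) n).sub (IsJac.psmul _)
  -- Step B : middle coefficients of `alphaP ^ p` are Lie mod p
  have hmid : ∀ i, 1 ≤ i → i < p → IsJac p ((alphaP ^ p).coeff i) := by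
    intro i h1 h2
    have hd := hgood_der (i - 1)
    rw [coeff_derivative] at hd
    have hi1 : i - 1 + 1 = i := by omega
    rw [← Nat.cast_add_one, hi1] at hd
    have hmul : (alphaP ^ p).coeff i * ((i : ℕ) : F) = (i : ℤ) • ((alphaP ^ p).coeff i) := by
      rw [← (Nat.cast_commute i ((alphaP ^ p).coeff i)).eq, ← nsmul_eq_mul, natCast_zsmul]
    rw [hmul] at hd
    have hco : IsCoprime (i : ℤ) (p : ℤ) := by
      have hcn : Nat.Coprime i p :=
        Nat.Coprime.symm (hp.coprime_iff_not_dvd.mpr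
          (fun hdvd => by have := Nat.le_of_dvd (by omega) hdvd; omega))
      exact Nat.isCoprime_iff_coprime.mpr hcn
    obtain ⟨u, v, huv⟩ := hco
    have hc : (alphaP ^ p).coeff i
        = u • ((i : ℤ) • (alphaP ^ p).coeff i) + (p : ℤ) • (v • (alphaP ^ p).coeff i) := by
      rw [smul_smul, smul_smul, ← add_smul,
        show u * (i : ℤ) + (p : ℤ) * v = 1 by linarith [huv], one_smul]
    rw [hc]
    exact (hd.zsmul u).add (IsJac.psmul _)
  -- Step C : sum of coefficients
  have hev : (𝕩 + 𝕪) ^ p = ∑ i ∈ range (p + 1), (alphaP ^ p).coeff i := by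
    have hcomm1 : ∀ a : F, Commute ((RingHom.id F) a) (1 : F) := fun a => Commute.one_right _
    set ev : Polynomial F →+* F := eval₂RingHom' (RingHom.id F) 1 hcomm1 with hev_def
    have h1 : ev (alphaP) = 𝕩 + 𝕪 := by
      rw [alphaP, map_add, map_mul]
      simp [hev_def]
    have h2 : ev (alphaP ^ p) = (𝕩 + 𝕪) ^ p := by rw [map_pow, h1]
    have h3 : ev (alphaP ^ p) = ∑ i ∈ range (p + 1), (alphaP ^ p).coeff i := by
      have hdeg : (alphaP ^ p).natDegree < p + 1 :=
        Nat.lt_succ_of_le (alphaP_pow_natDegree_le p)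
      rw [hev_def]
      show eval₂ (RingHom.id F) 1 (alphaP ^ p) = _
      rw [eval₂_eq_sum_range' (RingHom.id F) hdeg 1]
      simp
    rw [← h2, h3]
  have hsplit : ∑ i ∈ range (p + 1), (alphaP ^ p).coeff i
      = (alphaP ^ p).coeff 0 + (∑ i ∈ Ico 1 p, (alphaP ^ p).coeff i) + (alphaP ^ p).coeff p := by
    rw [sum_range_succ, range_eq_Ico, Finset.sum_eq_sum_Ico_succ_bot hp.pos]
  have hfinal : (𝕩 + 𝕪) ^ p - 𝕩 ^ p - 𝕪 ^ p = ∑ i ∈ Ico 1 p, (alphaP ^ p).coeff i := by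
    rw [hev, hsplit, alphaP_coeff_zero, alphaP_coeff_top]
    abel
  rw [hfinal]
  exact IsJac.sum fun i hi => hmid i (Finset.mem_Ico.mp hi).1 (Finset.mem_Ico.mp hi).2

end Poly

theorem pi_eval {S : Type*} [Ring S] (f : Fin 2 → S) (w : FreeLieAlgebra ℤ (Fin 2)) :
    FreeAlgebra.lift ℤ f (piF w) = FreeLieAlgebra.lift ℤ f w := by
  have h : (AlgHom.toLieHom (FreeAlgebra.lift ℤ f)).comp piF = FreeLieAlgebra.lift ℤ f := by
    apply FreeLieAlgebra.hom_ext
    intro i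
    rw [LieHom.comp_apply, piF, FreeLieAlgebra.lift_of_apply, FreeLieAlgebra.lift_of_apply,
      AlgHom.toLieHom_apply, FreeAlgebra.lift_ι_apply]
  exact LieHom.congr_fun h w

theorem lie_lift_comp {L L' : Type*} [LieRing L] [LieAlgebra ℤ L] [LieRing L'] [LieAlgebra ℤ L']
    (g : L →ₗ⁅ℤ⁆ L') (f : Fin 2 → L) (w : FreeLieAlgebra ℤ (Fin 2)) :
    g (FreeLieAlgebra.lift ℤ f w) = FreeLieAlgebra.lift ℤ (fun i => g (f i)) w := by
  have h : g.comp (FreeLieAlgebra.lift ℤ f) = FreeLieAlgebra.lift ℤ (fun i => g (f i)) := by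
    apply FreeLieAlgebra.hom_ext
    intro i
    rw [LieHom.comp_apply, FreeLieAlgebra.lift_of_apply, FreeLieAlgebra.lift_of_apply]
  exact LieHom.congr_fun h w

end PCurvAux


/-- **p-curvature is additive** (Katz, Proposition 5.2).
`X = Spec A` smooth over `S = Spec R` in characteristic `p > 0`, `(M, conn)` a
quasi-coherent module with integrable connection, the connection being given on
derivations `D : Der(X/S)` with the Leibniz rule and compatibility with brackets
(integrability).  The `p`-curvature `ψ(∇)(D) = (∇ D)^p - ∇(D^p)` is additive in `D`,
where `D^p` denotes the derivation whose underlying map is the `p`-fold iterate of `D`. -/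
theorem p_curvature_additive
    {R A : Type u} {M : Type*} [CommRing R] [CommRing A] [Algebra R A]
    [AddCommGroup M] [Module R M] [Module A M] [IsScalarTower R A M]
    (p : ℕ) [Fact p.Prime] [CharP A p]
    [Algebra.FormallySmooth R A]
    (conn : Derivation R A A → Module.End R M)
    (hadd : ∀ D₁ D₂ : Derivation R A A, conn (D₁ + D₂) = conn D₁ + conn D₂)
    (hlin : ∀ (f : A) (D : Derivation R A A), conn (f • D) = f • conn D)
    (hleibniz : ∀ (D : Derivation R A A) (a : A) (m : M),
      conn D (a • m) = a • conn D m + D a • m)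
    (hint : ∀ D₁ D₂ : Derivation R A A, conn ⁅D₁, D₂⁆ = ⁅conn D₁, conn D₂⁆)
    (D₁ D₂ D₁p D₂p D₁₂p : Derivation R A A)
    (h1 : ∀ a : A, D₁p a = (⇑D₁)^[p] a)
    (h2 : ∀ a : A, D₂p a = (⇑D₂)^[p] a)
    (h12 : ∀ a : A, D₁₂p a = (⇑(D₁ + D₂))^[p] a) :
    (conn (D₁ + D₂)) ^ p - conn D₁₂p =
      ((conn D₁) ^ p - conn D₁p) + ((conn D₂) ^ p - conn D₂p) := by
  have hp : p.Prime := Fact.out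
  classical
  letI : LieRing (Module.End R A) := LieRing.ofAssociativeRing
  letI : LieRing (Module.End R M) := LieRing.ofAssociativeRing
  -- the coercion `Derivation → End R A` as a `LieHom` over `ℤ`
  let θ : Derivation R A A →ₗ⁅ℤ⁆ Module.End R A :=
    { (AddMonoidHom.mk' (fun D : Derivation R A A => (D : A →ₗ[R] A))
        (fun D E => by ext a; simp)).toIntLinearMap with
      map_lie' := by
        intro D E
        exact Derivation.commutator_coe_linear_map }
  -- `conn` as a `LieHom` over `ℤ`
  let c' : Derivation R A A →ₗ⁅ℤ⁆ Module.End R M :=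
    { (AddMonoidHom.mk' conn hadd).toIntLinearMap with
      map_lie' := by intro D E; exact hint D E }
  let κ : FreeLieAlgebra ℤ (Fin 2) →ₗ⁅ℤ⁆ Derivation R A A :=
    FreeLieAlgebra.lift ℤ ![D₁, D₂]
  obtain ⟨W, Z, hWZ⟩ := PCurvAux.jacobson p hp
  set Wd : Derivation R A A := κ W with hWdDef
  -- ## Evaluation in `End R A`
  let f₁ : Fin 2 → Module.End R A := ![(D₁ : A →ₗ[R] A), (D₂ : A →ₗ[R] A)]
  have hθκ : θ Wd = FreeLieAlgebra.lift ℤ f₁ W := by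
    rw [hWdDef]
    show θ (FreeLieAlgebra.lift ℤ ![D₁, D₂] W) = _
    rw [PCurvAux.lie_lift_comp θ ![D₁, D₂] W]
    have hf : (fun i => θ (![D₁, D₂] i)) = f₁ := by
      funext i; fin_cases i <;> rfl
    rw [hf]
  have hA := congrArg (FreeAlgebra.lift ℤ f₁) hWZ
  simp only [map_sub, map_pow, map_add, map_zsmul, FreeAlgebra.lift_ι_apply,
    PCurvAux.pi_eval] at hA
  have hzeroA : ((p : ℤ) • (FreeAlgebra.lift ℤ f₁ Z) : Module.End R A) = 0 := by
    ext a
    simp only [LinearMap.smul_apply, LinearMap.zero_apply]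
    rw [zsmul_eq_mul, Int.cast_natCast, CharP.cast_eq_zero A p, zero_mul]
  rw [hzeroA, add_zero, ← hθκ] at hA
  have hA' : ((D₁ : A →ₗ[R] A) + (D₂ : A →ₗ[R] A)) ^ p
      = θ Wd + ((D₁ : A →ₗ[R] A) ^ p + (D₂ : A →ₗ[R] A) ^ p) := by
    have h := hA
    simp only [Matrix.cons_val_zero, Matrix.cons_val_one, Matrix.head_cons, f₁] at h
    rw [sub_sub, sub_eq_iff_eq_add] at h
    exact h
  -- ## identify `D₁₂p`
  have hD : D₁₂p = D₁p + D₂p + Wd := by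
    ext a
    have hfun : ⇑(D₁ + D₂) = ⇑((D₁ : A →ₗ[R] A) + (D₂ : A →ₗ[R] A)) := by
      funext b
      simp
    rw [h12 a, hfun, ← Module.End.pow_apply, hA']
    have hθWd : (θ Wd) a = Wd a := rfl
    simp only [LinearMap.add_apply, hθWd, Module.End.pow_apply, Derivation.add_apply]
    have e1 : ((D₁ : A →ₗ[R] A))^[p] a = D₁p a := by
      rw [h1 a]; rfl
    have e2 : ((D₂ : A →ₗ[R] A))^[p] a = D₂p a := by
      rw [h2 a]; rfl
    rw [e1, e2]
    abel
  have hConn : conn D₁₂p = conn D₁p + conn D₂p + c' Wd := by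
    rw [hD, hadd, hadd]
    rfl
  -- ## Evaluation in `End R M`
  let f₂ : Fin 2 → Module.End R M := ![conn D₁, conn D₂]
  have hcκ : c' Wd = FreeLieAlgebra.lift ℤ f₂ W := by
    rw [hWdDef]
    show c' (FreeLieAlgebra.lift ℤ ![D₁, D₂] W) = _
    rw [PCurvAux.lie_lift_comp c' ![D₁, D₂] W]
    have hf : (fun i => c' (![D₁, D₂] i)) = f₂ := by
      funext i; fin_cases i <;> rfl
    rw [hf]
  have hM := congrArg (FreeAlgebra.lift ℤ f₂) hWZ
  simp only [map_sub, map_pow, map_add, map_zsmul, FreeAlgebra.lift_ι_apply,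
    PCurvAux.pi_eval] at hM
  have hzeroM : ((p : ℤ) • (FreeAlgebra.lift ℤ f₂ Z) : Module.End R M) = 0 := by
    ext m
    have hm : ∀ m' : M, (p : ℤ) • m' = 0 := by
      intro m'
      rw [natCast_zsmul, ← Nat.cast_smul_eq_nsmul A p m', CharP.cast_eq_zero A p, zero_smul]
    simp only [LinearMap.smul_apply, LinearMap.zero_apply, hm]
  rw [hzeroM, add_zero, ← hcκ] at hM
  have hM' : (conn D₁ + conn D₂) ^ p = c' Wd + ((conn D₁) ^ p + (conn D₂) ^ p) := by
    have h := hM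
    simp only [Matrix.cons_val_zero, Matrix.cons_val_one, Matrix.head_cons, f₂] at h
    rw [sub_sub, sub_eq_iff_eq_add] at h
    exact h
  rw [hadd, hConn, hM']
  abel
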